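/- Let X be a balancing covariate of V, i.e., T is conditionally independent of V given X. If V satisfies exchangeability (Y(t) ⊥ T | V) and additionally Y(t) is conditionally independent of X given (V, T), then X also satisfies exchangeability: Y(t) ⊥ T | X. -/

import Mathlib

open MeasureTheory ProbabilityTheory
open scoped NNReal

section Aux

lemma indicator_inter_eq_mul {Ω : Type*} {A B : Set Ω} :
    ((A ∩ B).indicator (fun _ => (1:ℝ))) =
      (A.indicator (fun _ => (1:ℝ))) * (B.indicator (fun _ => (1:ℝ))) := by
  ext x
  by_cases hA : x ∈ A <;> by_cases hB : x ∈ B <;>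
    simp [Set.indicator_apply, hA, hB, Set.mem_inter_iff]

variable {Ω : Type*} {m' : MeasurableSpace Ω} [mΩ : MeasurableSpace Ω] [StandardBorelSpace Ω]
  {μ : Measure Ω} [IsProbabilityMeasure μ]

set_option linter.unusedSectionVars false in
omit [StandardBorelSpace Ω] in
lemma comap_prod_eq' {β γ : Type*} {mβ : MeasurableSpace β} {mγ : MeasurableSpace γ}
    (f : Ω → β) (g : Ω → γ) :
    MeasurableSpace.comap (fun ω => (f ω, g ω)) inferInstance
      = MeasurableSpace.comap f mβ ⊔ MeasurableSpace.comap g mγ := by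
  show MeasurableSpace.comap _ (mβ.comap Prod.fst ⊔ mγ.comap Prod.snd) = _
  rw [MeasurableSpace.comap_sup, MeasurableSpace.comap_comp, MeasurableSpace.comap_comp]
  rfl

/-- If `f ⟂ g | m'` then the conditional expectation of an indicator of an `f`-event
given `m' ⊔ σ(g)` equals the one given `m'`. -/
lemma condexp_indicator_sup_comap
    {β γ : Type*} {mβ : MeasurableSpace β} {mγ : MeasurableSpace γ}
    (hm' : m' ≤ mΩ)
    {f : Ω → β} {g : Ω → γ} (hf : Measurable f) (hg : Measurable g)
    (h : CondIndepFun m' hm' f g μ) {s : Set β} (hs : MeasurableSet s) :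
    μ⟦f ⁻¹' s | m' ⊔ MeasurableSpace.comap g mγ⟧ =ᵐ[μ] μ⟦f ⁻¹' s | m'⟧ := by
  have hm'' : m' ⊔ MeasurableSpace.comap g mγ ≤ mΩ := sup_le hm' hg.comap_le
  set F : Ω → ℝ := (f ⁻¹' s).indicator (fun _ => (1:ℝ)) with hFdef
  have hFint : Integrable F μ := (integrable_const (1:ℝ)).indicator (hf hs)
  set W : Ω → ℝ := μ[F | m'] with hWdef
  have hWint : Integrable W μ := integrable_condExp
  have hWbdd : ∀ᵐ x ∂μ, |W x| ≤ ((1:ℝ≥0) : ℝ) := by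
    refine ae_bdd_condExp_of_ae_bdd ?_
    refine Filter.Eventually.of_forall fun x => ?_
    by_cases hx : x ∈ f ⁻¹' s <;> simp [hFdef, Set.indicator_apply, hx]
  -- the π-system generating m' ⊔ σ(g)
  set π : Set (Set Ω) :=
    {A | ∃ B C, MeasurableSet[m'] B ∧ MeasurableSet C ∧ A = B ∩ g ⁻¹' C} with hπdef
  have h_eq : m' ⊔ MeasurableSpace.comap g mγ = MeasurableSpace.generateFrom π := by
    refine le_antisymm (sup_le ?_ ?_) (MeasurableSpace.generateFrom_le ?_)
    · intro A hA
      exact MeasurableSpace.measurableSet_generateFrom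
        ⟨A, Set.univ, hA, MeasurableSet.univ, by simp⟩
    · rintro A ⟨C, hC, rfl⟩
      exact MeasurableSpace.measurableSet_generateFrom
        ⟨Set.univ, C, MeasurableSet.univ, hC, by simp⟩
    · rintro A ⟨B, C, hB, hC, rfl⟩
      exact ((le_sup_left : m' ≤ m' ⊔ MeasurableSpace.comap g mγ) B hB).inter
        ((le_sup_right : MeasurableSpace.comap g mγ ≤ m' ⊔ MeasurableSpace.comap g mγ)
          _ ⟨C, hC, rfl⟩)
  have h_pi : IsPiSystem π := by
    rintro A ⟨B1, C1, hB1, hC1, rfl⟩ A' ⟨B2, C2, hB2, hC2, rfl⟩ -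
    refine ⟨B1 ∩ B2, C1 ∩ C2, hB1.inter hB2, hC1.inter hC2, ?_⟩
    rw [Set.preimage_inter]
    ext x; simp [Set.mem_inter_iff]; tauto
  -- the integral identity on all (m' ⊔ σ(g))-measurable sets
  have key : ∀ ⦃A : Set Ω⦄, MeasurableSet[m' ⊔ MeasurableSpace.comap g mγ] A →
      ∫ x in A, W x ∂μ = ∫ x in A, F x ∂μ := by
    refine MeasurableSpace.induction_on_inter
      (m := m' ⊔ MeasurableSpace.comap g mγ) h_eq h_pi (by simp) ?_ ?_ ?_
    · -- basic sets B ∩ g⁻¹ C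
      rintro A ⟨B, C, hB, hC, rfl⟩
      set G : Ω → ℝ := (g ⁻¹' C).indicator (fun _ => (1:ℝ)) with hGdef
      have hGint : Integrable G μ := (integrable_const (1:ℝ)).indicator (hg hC)
      have hpull : μ[W * G | m'] =ᵐ[μ] W * μ[G | m'] :=
        condExp_stronglyMeasurable_mul_of_bound hm' stronglyMeasurable_condExp hGint 1 hWbdd
      have hprod : μ[F * G | m'] =ᵐ[μ] W * μ[G | m'] := by
        have h1 : F * G = ((f ⁻¹' s ∩ g ⁻¹' C).indicator (fun _ => (1:ℝ))) :=
          indicator_inter_eq_mul.symm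
        have h2 := (condIndepFun_iff_condExp_inter_preimage_eq_mul (μ := μ)
          (hm' := hm') hf hg).mp h s C hs hC
        rw [h1]
        exact h2.trans (by rfl)
      have hBmeas : MeasurableSet B := hm' B hB
      have step1 : ∀ (φ : Ω → ℝ), ∫ x in B ∩ g ⁻¹' C, φ x ∂μ = ∫ x in B, (φ * G) x ∂μ := by
        intro φ
        have : (φ * G) = (g ⁻¹' C).indicator φ := by
          ext x; by_cases hx : x ∈ g ⁻¹' C <;> simp [hGdef, Set.indicator_apply, hx]
        rw [this, setIntegral_indicator (hg hC)]
      rw [step1 W, step1 F]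
      have hFG : Integrable (F * G) μ := by
        rw [show F * G = ((f ⁻¹' s ∩ g ⁻¹' C).indicator (fun _ => (1:ℝ))) from
          indicator_inter_eq_mul.symm]
        exact (integrable_const (1:ℝ)).indicator ((hf hs).inter (hg hC))
      have hWG : Integrable (W * G) μ := by
        refine hGint.bdd_mul (c := 1) ?_ ?_
        · exact (stronglyMeasurable_condExp.mono hm').aestronglyMeasurable
        · filter_upwards [hWbdd] with x hx
          simpa using hx
      calc ∫ x in B, (W * G) x ∂μ
          = ∫ x in B, (μ[W * G | m']) x ∂μ := (setIntegral_condExp hm' hWG hB).symm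
        _ = ∫ x in B, (W * μ[G | m']) x ∂μ :=
            integral_congr_ae (ae_restrict_of_ae hpull)
        _ = ∫ x in B, (μ[F * G | m']) x ∂μ :=
            (integral_congr_ae (ae_restrict_of_ae hprod)).symm
        _ = ∫ x in B, (F * G) x ∂μ := setIntegral_condExp hm' hFG hB
    · -- complements
      intro A hA hint
      have hA' : MeasurableSet A := hm'' A hA
      have h1 := integral_add_compl hA' hWint
      have h2 := integral_add_compl hA' hFint
      have h3 : ∫ x, W x ∂μ = ∫ x, F x ∂μ := integral_condExp hm'
      linarith
    · -- countable disjoint unions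
      intro u hdisj hmeas hint
      have hmeas' : ∀ i, MeasurableSet (u i) := fun i => hm'' _ (hmeas i)
      rw [integral_iUnion hmeas' hdisj hWint.integrableOn,
        integral_iUnion hmeas' hdisj hFint.integrableOn]
      exact tsum_congr hint
  exact (ae_eq_condExp_of_forall_setIntegral_eq hm'' hFint
    (fun A _ _ => hWint.integrableOn)
    (fun A hA _ => key hA)
    ((stronglyMeasurable_condExp (m := m') (μ := μ) (f := F)).mono
      (le_sup_left : m' ≤ m' ⊔ MeasurableSpace.comap g mγ)).aestronglyMeasurable).symm

end Aux

theorem exchangeability_of_balancing_covariate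
    {Ω 𝒱 𝒳 𝒴 : Type*}
    [MeasurableSpace Ω] [StandardBorelSpace Ω]
    [MeasurableSpace 𝒱] [MeasurableSpace 𝒳] [MeasurableSpace 𝒴]
    (μ : Measure Ω) [IsProbabilityMeasure μ]
    (T : Ω → Bool) (hT : Measurable T)
    (V : Ω → 𝒱) (hV : Measurable V)
    (X : Ω → 𝒳) (hX : Measurable X)
    (Y : Bool → Ω → 𝒴) (hY : ∀ t, Measurable (Y t))
    -- `X` is a balancing covariate of `V`: `T ⟂ V | X`
    (hbal : CondIndepFun (MeasurableSpace.comap X inferInstance) hX.comap_le T V μ)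
    -- exchangeability given `V`: `Y t ⟂ T | V`
    (hexch : ∀ t, CondIndepFun (MeasurableSpace.comap V inferInstance)
        hV.comap_le (Y t) T μ)
    -- `Y t ⟂ X | (V, T)`
    (hYX : ∀ t, CondIndepFun
        (MeasurableSpace.comap (fun ω => (V ω, T ω)) inferInstance)
        ((hV.prodMk hT).comap_le) (Y t) X μ) :
    -- conclusion: exchangeability given `X`: `Y t ⟂ T | X`
    ∀ t, CondIndepFun (MeasurableSpace.comap X inferInstance) hX.comap_le (Y t) T μ := by
  intro t
  rw [condIndepFun_iff_condExp_inter_preimage_eq_mul (hY t) hT]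
  intro s u hs hu
  -- notation for the σ-algebras involved
  have hmX : MeasurableSpace.comap X inferInstance ≤ ‹MeasurableSpace Ω› := hX.comap_le
  have hmV : MeasurableSpace.comap V inferInstance ≤ ‹MeasurableSpace Ω› := hV.comap_le
  have hmVT : MeasurableSpace.comap (fun ω => (V ω, T ω)) inferInstance
      ≤ ‹MeasurableSpace Ω› := (hV.prodMk hT).comap_le
  have hbig : MeasurableSpace.comap (fun ω => (V ω, T ω)) inferInstance
      ⊔ MeasurableSpace.comap X inferInstance ≤ ‹MeasurableSpace Ω› := sup_le hmVT hmX
  have hbig2 : MeasurableSpace.comap X inferInstance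
      ⊔ MeasurableSpace.comap V inferInstance ≤ ‹MeasurableSpace Ω› := sup_le hmX hmV
  -- the indicator functions
  set F : Ω → ℝ := ((Y t) ⁻¹' s).indicator (fun _ => (1:ℝ)) with hFdef
  set G : Ω → ℝ := (T ⁻¹' u).indicator (fun _ => (1:ℝ)) with hGdef
  have hFint : Integrable F μ := (integrable_const (1:ℝ)).indicator ((hY t) hs)
  have hGint : Integrable G μ := (integrable_const (1:ℝ)).indicator (hT hu)
  set H : Ω → ℝ := μ[F | MeasurableSpace.comap V inferInstance] with hHdef
  set K : Ω → ℝ := μ[G | MeasurableSpace.comap X inferInstance] with hKdef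
  have hHbdd : ∀ᵐ x ∂μ, |H x| ≤ ((1:ℝ≥0) : ℝ) := by
    refine ae_bdd_condExp_of_ae_bdd (Filter.Eventually.of_forall fun x => ?_)
    by_cases hx : x ∈ (Y t) ⁻¹' s <;> simp [hFdef, Set.indicator_apply, hx]
  have hKbdd : ∀ᵐ x ∂μ, |K x| ≤ ((1:ℝ≥0) : ℝ) := by
    refine ae_bdd_condExp_of_ae_bdd (Filter.Eventually.of_forall fun x => ?_)
    by_cases hx : x ∈ T ⁻¹' u <;> simp [hGdef, Set.indicator_apply, hx]
  -- the three applications of the key lemma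
  have hA1 : μ[F | MeasurableSpace.comap (fun ω => (V ω, T ω)) inferInstance
        ⊔ MeasurableSpace.comap X inferInstance]
      =ᵐ[μ] μ[F | MeasurableSpace.comap (fun ω => (V ω, T ω)) inferInstance] :=
    condexp_indicator_sup_comap hmVT (hY t) hX (hYX t) hs
  have hA2 : μ[F | MeasurableSpace.comap (fun ω => (V ω, T ω)) inferInstance]
      =ᵐ[μ] H := by
    rw [comap_prod_eq' V T]
    exact condexp_indicator_sup_comap hmV (hY t) hT (hexch t) hs
  have hA3 : μ[G | MeasurableSpace.comap X inferInstance
        ⊔ MeasurableSpace.comap V inferInstance] =ᵐ[μ] K :=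
    condexp_indicator_sup_comap hmX hT hV hbal hu
  -- `G` is measurable w.r.t. the big σ-algebra
  have hTmem : MeasurableSet[MeasurableSpace.comap (fun ω => (V ω, T ω)) inferInstance
      ⊔ MeasurableSpace.comap X inferInstance] (T ⁻¹' u) := by
    apply (le_sup_left : MeasurableSpace.comap (fun ω => (V ω, T ω)) inferInstance ≤ _)
    rw [comap_prod_eq' V T]
    exact (le_sup_right : MeasurableSpace.comap T inferInstance ≤ _) _ ⟨u, hu, rfl⟩
  have hGsm : StronglyMeasurable[MeasurableSpace.comap (fun ω => (V ω, T ω)) inferInstance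
      ⊔ MeasurableSpace.comap X inferInstance] G :=
    stronglyMeasurable_const.indicator hTmem
  -- step 1: μ[F*G|X] = μ[G*H|X]
  have e2 : μ[F * G | MeasurableSpace.comap (fun ω => (V ω, T ω)) inferInstance
        ⊔ MeasurableSpace.comap X inferInstance]
      =ᵐ[μ] G * H := by
    rw [show F * G = G * F from mul_comm F G]
    refine (condExp_stronglyMeasurable_mul_of_bound hbig hGsm hFint 1 ?_).trans ?_
    · refine Filter.Eventually.of_forall fun x => ?_
      by_cases hx : x ∈ T ⁻¹' u <;> simp [hGdef, Set.indicator_apply, hx]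
    · filter_upwards [hA1, hA2] with ω h1 h2
      simp only [Pi.mul_apply]
      rw [h1, h2]
  have chain1 : μ[F * G | MeasurableSpace.comap X inferInstance]
      =ᵐ[μ] μ[G * H | MeasurableSpace.comap X inferInstance] :=
    (condExp_condExp_of_le le_sup_right hbig).symm.trans (condExp_congr_ae e2)
  -- step 2: μ[G*H|X] = μ[H*K|X]
  have e6 : μ[G * H | MeasurableSpace.comap X inferInstance
        ⊔ MeasurableSpace.comap V inferInstance] =ᵐ[μ] H * K := by
    rw [show G * H = H * G from mul_comm G H]
    refine (condExp_stronglyMeasurable_mul_of_bound hbig2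
      (stronglyMeasurable_condExp.mono le_sup_right) hGint 1 hHbdd).trans ?_
    filter_upwards [hA3] with ω h3
    simp only [Pi.mul_apply]
    rw [h3]
  have chain2 : μ[G * H | MeasurableSpace.comap X inferInstance]
      =ᵐ[μ] μ[H * K | MeasurableSpace.comap X inferInstance] :=
    (condExp_condExp_of_le le_sup_left hbig2).symm.trans (condExp_congr_ae e6)
  -- step 3: pull out K
  have e9 : μ[H * K | MeasurableSpace.comap X inferInstance]
      =ᵐ[μ] K * μ[H | MeasurableSpace.comap X inferInstance] := by
    rw [show H * K = K * H from mul_comm H K]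
    exact condExp_stronglyMeasurable_mul_of_bound hmX stronglyMeasurable_condExp
      integrable_condExp 1 hKbdd
  have e10 : μ[H | MeasurableSpace.comap X inferInstance]
      =ᵐ[μ] μ[F | MeasurableSpace.comap X inferInstance] :=
    (condExp_congr_ae (hA1.trans hA2)).symm.trans (condExp_condExp_of_le le_sup_right hbig)
  -- assemble
  have hFG : (((Y t) ⁻¹' s ∩ T ⁻¹' u).indicator fun _ => (1:ℝ)) = F * G :=
    indicator_inter_eq_mul
  calc μ[(((Y t) ⁻¹' s ∩ T ⁻¹' u).indicator fun _ => (1:ℝ))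
        | MeasurableSpace.comap X inferInstance]
      =ᵐ[μ] μ[F * G | MeasurableSpace.comap X inferInstance] := by rw [hFG]
    _ =ᵐ[μ] μ[G * H | MeasurableSpace.comap X inferInstance] := chain1
    _ =ᵐ[μ] μ[H * K | MeasurableSpace.comap X inferInstance] := chain2
    _ =ᵐ[μ] K * μ[H | MeasurableSpace.comap X inferInstance] := e9
    _ =ᵐ[μ] fun ω => (μ[F | MeasurableSpace.comap X inferInstance]) ω * K ω := by
        filter_upwards [e10] with ω h10
        simp only [Pi.mul_apply]
        rw [h10, mul_comm]
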